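/- Let L be a finite lower semimodular lattice, X a maximal CD-independent subset of L, and C a maximal chain of L. Then C ∪ Atoms(L) is a maximal CD-independent subset of L. -/

import Mathlib

open scoped Classical

/-- A subset `X` of a lattice with `⊥` is CD-independent if any two
incomparable members meet to `⊥`. -/
def CDIndep {L : Type*} [Lattice L] [OrderBot L] (X : Set L) : Prop :=
  ∀ x ∈ X, ∀ y ∈ X, ¬ x ≤ y → ¬ y ≤ x → x ⊓ y = ⊥

/-- `X` is a maximal CD-independent subset of `S` (within the ambient lattice). -/
def MaxCDIndepIn {L : Type*} [Lattice L] [OrderBot L] (S X : Set L) : Prop :=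
  X ⊆ S ∧ CDIndep X ∧ ∀ Y ⊆ S, CDIndep Y → X ⊆ Y → Y = X

/-- `X` is a maximal CD-independent subset of the whole lattice. -/
def MaxCDIndep {L : Type*} [Lattice L] [OrderBot L] (X : Set L) : Prop :=
  MaxCDIndepIn Set.univ X

/-- The length of the subposet `S`: the size of a longest chain contained in `S`, minus 1. -/
noncomputable def chainLen {L : Type*} [Lattice L] [Fintype L] (S : Set L) : ℕ :=
  ((Finset.univ.powerset.filter
      fun C : Finset L => ↑C ⊆ S ∧ IsChain (· ≤ ·) (C : Set L)).sup Finset.card) - 1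

/-- The length of the finite lattice `L`. -/
noncomputable def latLen (L : Type*) [Lattice L] [Fintype L] : ℕ :=
  chainLen (Set.univ : Set L)

/-- `u_*`: the meet of all lower covers of `u`. -/
noncomputable def lowstar {L : Type*} [Lattice L] [Fintype L] [BoundedOrder L] (u : L) : L :=
  (Finset.univ.filter fun v => v ⋖ u).inf id

/-- `L` is meet-distributive if every interval `[u_*, u]` (for `u ≠ ⊥`) is distributive. -/
def MeetDistrib (L : Type*) [Lattice L] [Fintype L] [BoundedOrder L] : Prop :=
  ∀ u : L, u ≠ ⊥ → ∀ x ∈ Set.Icc (lowstar u) u, ∀ y ∈ Set.Icc (lowstar u) u,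
    ∀ z ∈ Set.Icc (lowstar u) u, x ⊓ (y ⊔ z) = (x ⊓ y) ⊔ (x ⊓ z)

/-- Lower semimodularity: `a ⋖ a ⊔ b` implies `a ⊓ b ⋖ b`. -/
def LowerSemimodular (L : Type*) [Lattice L] : Prop :=
  ∀ a b : L, a ⋖ a ⊔ b → a ⊓ b ⋖ b

/-- The number of atoms of `L`. -/
noncomputable def atomsCard (L : Type*) [Lattice L] [OrderBot L] : ℕ :=
  {a : L | IsAtom a}.ncard

/-- `b` is the pseudocomplement of `a`: the largest element meeting `a` to `⊥`. -/
def PseudoCompl {L : Type*} [Lattice L] [OrderBot L] (a b : L) : Prop :=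
  a ⊓ b = ⊥ ∧ ∀ x, a ⊓ x = ⊥ → x ≤ b

/-- `(a, b)` is a pseudocomplemented pair: each is the pseudocomplement of the other. -/
def PseudoPair {L : Type*} [Lattice L] [OrderBot L] (a b : L) : Prop :=
  PseudoCompl a b ∧ PseudoCompl b a

/-- An element is meet-irreducible if it has exactly one cover. -/
def MeetIrred {L : Type*} [Lattice L] (a : L) : Prop :=
  ∃! b, a ⋖ b

/-- `L` is dually slim: no three-element antichain of meet-irreducible elements. -/
def DuallySlim (L : Type*) [Lattice L] : Prop :=
  ¬ ∃ x y z : L, MeetIrred x ∧ MeetIrred y ∧ MeetIrred z ∧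
    ¬ x ≤ y ∧ ¬ y ≤ x ∧ ¬ x ≤ z ∧ ¬ z ≤ x ∧ ¬ y ≤ z ∧ ¬ z ≤ y

theorem maxChain_union_atoms_maximal_CDIndep {L : Type*} [Lattice L] [Fintype L]
    [BoundedOrder L] (hLSM : LowerSemimodular L)
    (X : Set L) (hX : MaxCDIndep X)
    (C : Set L) (hC : IsMaxChain (· ≤ ·) C) :
    MaxCDIndep (C ∪ {a : L | IsAtom a}) := by

  obtain ⟨hCc, hCmax⟩ := hC
  have hbot : (⊥:L) ∈ C := by
    have h := hCmax
      (hCc.insert (fun b _ _ => Or.inl bot_le)) (Set.subset_insert _ _)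
    rw [h]; exact Set.mem_insert _ _
  have htop : (⊤:L) ∈ C := by
    have h := hCmax
      (hCc.insert (fun b _ _ => Or.inr le_top)) (Set.subset_insert _ _)
    rw [h]; exact Set.mem_insert _ _
  have hatom_meet : ∀ a x : L, IsAtom a → ¬ a ≤ x → a ⊓ x = ⊥ := by
    intro a x ha hax
    rcases ha.le_iff.mp inf_le_left with h | h
    · exact h
    · exact absurd (h ▸ inf_le_right) hax
  refine ⟨Set.subset_univ _, ?_, ?_⟩
  · intro x hx y hy hxy hyx
    rcases hx with hx | hx
    · rcases hy with hy | hy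
      · rcases hCc hx hy (fun h => hxy (le_of_eq h)) with h | h
        · exact absurd h hxy
        · exact absurd h hyx
      · rw [inf_comm]; exact hatom_meet y x hy hyx
    · exact hatom_meet x y hx hxy
  · intro Y _ hYcd hsub
    refine Set.Subset.antisymm ?_ hsub
    intro y hy
    by_cases hyC : y ∈ C
    · exact Or.inl hyC
    right
    have hyne : y ≠ ⊥ := fun h => hyC (h ▸ hbot)
    -- minimal element of C above y
    obtain ⟨d, hdT, hdmin⟩ := Set.Finite.exists_minimalFor id {c ∈ C | y ≤ c}
      (Set.toFinite _) ⟨⊤, htop, le_top⟩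
    obtain ⟨hdC, hyd⟩ := hdT
    have hylt : y < d := lt_of_le_of_ne hyd (fun h => hyC (h ▸ hdC))
    have hdne : d ≠ ⊥ := fun h => hyne (le_bot_iff.mp (h ▸ hyd))
    -- maximal element of C below d
    obtain ⟨e, heS, hemax⟩ := Set.Finite.exists_maximalFor id {c ∈ C | c < d}
      (Set.toFinite _) ⟨⊥, hbot, bot_lt_iff_ne_bot.mpr hdne⟩
    obtain ⟨heC, hed⟩ := heS
    simp only [id_eq] at hemax hdmin
    have hcov : e ⋖ d := by
      refine ⟨hed, ?_⟩
      intro z hez hzd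
      have hzC : z ∈ C := by
        have h := hCmax ?_ (Set.subset_insert _ _ : C ⊆ insert z C)
        · rw [h]; exact Set.mem_insert _ _
        · refine hCc.insert ?_
          intro c hcC _
          rcases eq_or_ne c d with rfl | hcd
          · exact Or.inl hzd.le
          rcases hCc hcC hdC hcd with h | h
          · have hcd' : c < d := lt_of_le_of_ne h hcd
            rcases eq_or_ne c e with rfl | hce
            · exact Or.inr hez.le
            rcases hCc hcC heC hce with h2 | h2
            · exact Or.inr (h2.trans hez.le)
            · exact Or.inr ((le_antisymm h2 (hemax ⟨hcC, hcd'⟩ h2)) ▸ hez.le)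
          · exact Or.inl (hzd.le.trans h)
      exact absurd (hemax ⟨hzC, hzd⟩ hez.le) (not_le_of_gt hez)
    by_cases hey : e ≤ y
    · rcases eq_or_lt_of_le hey with h | h
      · exact absurd (h ▸ hyC) (fun hc => hc heC)
      · exact absurd hylt (hcov.2 h)
    by_cases hye : y ≤ e
    · have := hdmin ⟨heC, hye⟩ hed.le
      exact absurd (lt_of_lt_of_le hed this) (lt_irrefl _)
    have hmeet : e ⊓ y = ⊥ := hYcd e (hsub (Or.inl heC)) y hy hey hye
    have hjoin : e ⊔ y = d := by
      have h1 : e < e ⊔ y := lt_of_le_of_ne le_sup_left (fun h => hye (h ▸ le_sup_right))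
      have h2 : e ⊔ y ≤ d := sup_le hed.le hyd
      rcases eq_or_lt_of_le h2 with h | h
      · exact h
      · exact absurd h (hcov.2 h1)
    have hatom : ⊥ ⋖ y := by
      have := hLSM e y (hjoin ▸ hcov)
      rwa [hmeet] at this
    exact bot_covBy_iff.mp hatom
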